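/- (High-low frequency estimate for B_2) Let s ≥ 0, 0 ≤ α < 1/2, and let N be a positive integer. Then for every t ∈ ℝ there is a constant C(s,α), independent of N, such that ‖B_2(𝒫u, 𝒬v)‖_{Ḣ^s} ≤ C(s,α) (1/N) ‖u‖_{Ḣ^{−α}} ‖v‖_{Ḣ^s} for all u ∈ Ḣ^{−α} and v ∈ Ḣ^s. -/

import Mathlib

open MeasureTheory Set

noncomputable section

/-- The weight `|k|^(2s)` appearing in the `Ḣ^s` norm. -/
def wt (s : ℝ) (k : ℤ) : ℝ := ((|k| : ℤ) : ℝ) ^ (2 * s)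

/-- Membership in the homogeneous Sobolev space `Ḣ^s` of sequences indexed by
nonzero integers. -/
def memH (s : ℝ) (u : ℤ → ℂ) : Prop :=
  Summable (fun k : {k : ℤ // k ≠ 0} => wt s k.1 * ‖u k.1‖ ^ 2)

/-- The `Ḣ^s` norm. -/
def hnorm (s : ℝ) (u : ℤ → ℂ) : ℝ :=
  Real.sqrt (∑' k : {k : ℤ // k ≠ 0}, wt s k.1 * ‖u k.1‖ ^ 2)

/-- The `(Ḣ^s)²` norm of a pair. -/
def hnorm2 (s : ℝ) (u v : ℤ → ℂ) : ℝ :=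
  Real.sqrt (hnorm s u ^ 2 + hnorm s v ^ 2)

/-- The conserved energy functional `𝓔(u,v) = 2‖u‖² + 2‖v‖² + ‖u-v‖²` (in `Ḣ^0`). -/
def energyE (u v : ℤ → ℂ) : ℝ :=
  2 * hnorm 0 u ^ 2 + 2 * hnorm 0 v ^ 2 + hnorm 0 (fun k => u k - v k) ^ 2

/-- Projection `𝒫` onto the low Fourier modes `|k| ≤ N`. -/
def Plow (N : ℕ) (u : ℤ → ℂ) : ℤ → ℂ := fun k => if |k| ≤ (N : ℤ) then u k else 0

/-- Projection `𝒬 = I - 𝒫` onto the high Fourier modes `|k| > N`. -/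
def Qhigh (N : ℕ) (u : ℤ → ℂ) : ℤ → ℂ := fun k => if |k| ≤ (N : ℤ) then 0 else u k

/-- The oscillating factor `e^{3 i k k₁ k₂ t}` with `k₂ = k - k₁`. -/
def osc2 (t : ℝ) (k k1 : ℤ) : ℂ :=
  Complex.exp (3 * Complex.I * (k : ℂ) * (k1 : ℂ) * ((k - k1 : ℤ) : ℂ) * (t : ℂ))

/-- The oscillating factor `e^{3 i (k₁+k₂)(k₂+k₃)(k₁+k₃) t}`. -/
def osc3 (t : ℝ) (k1 k2 k3 : ℤ) : ℂ :=
  Complex.exp (3 * Complex.I * ((k1 + k2 : ℤ) : ℂ) * ((k2 + k3 : ℤ) : ℂ) *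
    ((k1 + k3 : ℤ) : ℂ) * (t : ℂ))

/-- The bilinear operator `B₁` at time `t`. -/
def B1 (t : ℝ) (φ ψ : ℤ → ℂ) : ℤ → ℂ := fun k =>
  Complex.I * (k : ℂ) / 2 *
    ∑' k1 : ℤ, if k1 ≠ 0 ∧ k - k1 ≠ 0 then osc2 t k k1 * φ k1 * ψ (k - k1) else 0

/-- The bilinear operator `B₂` at time `t`. -/
def B2 (t : ℝ) (φ ψ : ℤ → ℂ) : ℤ → ℂ := fun k =>
  (1 / 6 : ℂ) *
    ∑' k1 : ℤ, if k1 ≠ 0 ∧ k - k1 ≠ 0 then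
      osc2 t k k1 * φ k1 * ψ (k - k1) / ((k1 : ℂ) * ((k - k1 : ℤ) : ℂ)) else 0

/-- The trilinear operator `R₃` at time `t`. -/
def R3 (t : ℝ) (φ ψ ξ : ℤ → ℂ) : ℤ → ℂ := fun k =>
  ∑' p : ℤ × ℤ,
    if p.1 ≠ 0 ∧ p.2 ≠ 0 ∧ k - p.1 - p.2 ≠ 0 then
      osc3 t p.1 p.2 (k - p.1 - p.2) * φ p.1 * ψ p.2 * ξ (k - p.1 - p.2) / (p.1 : ℂ)
    else 0

/-- The resonant part `R₃res` (sum over `(k₁+k₂)(k₂+k₃)(k₁+k₃) = 0`). -/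
def R3res (φ ψ ξ : ℤ → ℂ) : ℤ → ℂ := fun k =>
  ∑' p : ℤ × ℤ,
    if p.1 ≠ 0 ∧ p.2 ≠ 0 ∧ k - p.1 - p.2 ≠ 0 ∧
        (p.1 + p.2) * (p.2 + (k - p.1 - p.2)) * (p.1 + (k - p.1 - p.2)) = 0 then
      φ p.1 * ψ p.2 * ξ (k - p.1 - p.2) / (p.1 : ℂ)
    else 0

/-- The nonresonant part `R₃nres` (sum over `(k₁+k₂)(k₂+k₃)(k₁+k₃) ≠ 0`). -/
def R3nres (t : ℝ) (φ ψ ξ : ℤ → ℂ) : ℤ → ℂ := fun k =>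
  ∑' p : ℤ × ℤ,
    if p.1 ≠ 0 ∧ p.2 ≠ 0 ∧ k - p.1 - p.2 ≠ 0 ∧
        (p.1 + p.2) * (p.2 + (k - p.1 - p.2)) * (p.1 + (k - p.1 - p.2)) ≠ 0 then
      osc3 t p.1 p.2 (k - p.1 - p.2) * φ p.1 * ψ p.2 * ξ (k - p.1 - p.2) / (p.1 : ℂ)
    else 0

/-- The operator `R₃nres1(φ,ψ,ξ) = R₃nres(φ,𝒫ψ,ξ) + R₃nres(φ,𝒬ψ,𝒫ξ)`. -/
def R3nres1 (N : ℕ) (t : ℝ) (φ ψ ξ : ℤ → ℂ) : ℤ → ℂ := fun k =>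
  R3nres t φ (Plow N ψ) ξ k + R3nres t φ (Qhigh N ψ) (Plow N ξ) k

/-- The trilinear operator `B₃` (nonresonant indices). -/
def B3 (t : ℝ) (φ ψ ξ : ℤ → ℂ) : ℤ → ℂ := fun k =>
  ∑' p : ℤ × ℤ,
    if p.1 ≠ 0 ∧ p.2 ≠ 0 ∧ k - p.1 - p.2 ≠ 0 ∧
        (p.1 + p.2) * (p.2 + (k - p.1 - p.2)) * (p.1 + (k - p.1 - p.2)) ≠ 0 then
      osc3 t p.1 p.2 (k - p.1 - p.2) * φ p.1 * ψ p.2 * ξ (k - p.1 - p.2) /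
        ((p.1 : ℂ) * ((p.1 + p.2 : ℤ) : ℂ) * ((p.2 + (k - p.1 - p.2) : ℤ) : ℂ) *
          ((p.1 + (k - p.1 - p.2) : ℤ) : ℂ))
    else 0

/-- The operator `B₃₀(φ,ψ,ξ) = B₃(φ,𝒬ψ,𝒬ξ)`. -/
def B30 (N : ℕ) (t : ℝ) (φ ψ ξ : ℤ → ℂ) : ℤ → ℂ :=
  B3 t φ (Qhigh N ψ) (Qhigh N ξ)

/-- The phase `Φ(k₁,k₂,k₃,k₄) = (k₁+k₂+k₃+k₄)³ - k₁³ - k₂³ - k₃³ - k₄³`. -/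
def Phi4 (k1 k2 k3 k4 : ℤ) : ℤ :=
  (k1 + k2 + k3 + k4) ^ 3 - k1 ^ 3 - k2 ^ 3 - k3 ^ 3 - k4 ^ 3

/-- The oscillating factor `e^{i Φ(k₁,k₂,k₃,k₄) t}`. -/
def osc4 (t : ℝ) (k1 k2 k3 k4 : ℤ) : ℂ :=
  Complex.exp (Complex.I * ((Phi4 k1 k2 k3 k4 : ℤ) : ℂ) * (t : ℂ))

/-- The quadrilinear operator `B₄¹`. -/
def B41 (t : ℝ) (φ ψ ξ η : ℤ → ℂ) : ℤ → ℂ := fun k =>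
  ∑' q : ℤ × ℤ × ℤ,
    let k1 := q.1; let k2 := q.2.1; let k3 := q.2.2; let k4 := k - k1 - k2 - k3
    if k1 ≠ 0 ∧ k2 ≠ 0 ∧ k3 ≠ 0 ∧ k4 ≠ 0 ∧
        (k1 + k2) * (k1 + k3 + k4) * (k2 + k3 + k4) ≠ 0 then
      osc4 t k1 k2 k3 k4 * φ k1 * ψ k2 * ξ k3 * η k4 /
        (((k1 + k2 : ℤ) : ℂ) * ((k1 + k3 + k4 : ℤ) : ℂ) * ((k2 + k3 + k4 : ℤ) : ℂ))
    else 0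

/-- The quadrilinear operator `B₄²`. -/
def B42 (t : ℝ) (φ ψ ξ η : ℤ → ℂ) : ℤ → ℂ := fun k =>
  ∑' q : ℤ × ℤ × ℤ,
    let k1 := q.1; let k2 := q.2.1; let k3 := q.2.2; let k4 := k - k1 - k2 - k3
    if k1 ≠ 0 ∧ k2 ≠ 0 ∧ k3 ≠ 0 ∧ k4 ≠ 0 ∧
        (k1 + k2) * (k1 + k3 + k4) * (k2 + k3 + k4) ≠ 0 then
      osc4 t k1 k2 k3 k4 * ((k3 + k4 : ℤ) : ℂ) * φ k1 * ψ k2 * ξ k3 * η k4 /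
        ((k1 : ℂ) * ((k1 + k2 : ℤ) : ℂ) * ((k1 + k3 + k4 : ℤ) : ℂ) *
          ((k2 + k3 + k4 : ℤ) : ℂ))
    else 0

/-- The quadrilinear operator `B₄ = B₄¹ + B₄²`. -/
def B4 (t : ℝ) (φ ψ ξ η : ℤ → ℂ) : ℤ → ℂ := fun k =>
  B41 t φ ψ ξ η k + B42 t φ ψ ξ η k

/-- Right-hand side (before the `ik/2` factor and integration) of the `u`-equation
of the transformed Majda–Biello system. -/
def mbRHSu (u v : ℝ → ℤ → ℂ) (τ : ℝ) (k : ℤ) : ℂ :=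
  ∑' k1 : ℤ, if k1 ≠ 0 ∧ k - k1 ≠ 0 then
    osc2 τ k k1 * (u τ k1 * v τ (k - k1) - u τ k1 * u τ (k - k1)) else 0

/-- Right-hand side (before the `ik/2` factor and integration) of the `v`-equation
of the transformed Majda–Biello system. -/
def mbRHSv (u v : ℝ → ℤ → ℂ) (τ : ℝ) (k : ℤ) : ℂ :=
  ∑' k1 : ℤ, if k1 ≠ 0 ∧ k - k1 ≠ 0 then
    osc2 τ k k1 * (u τ k1 * v τ (k - k1) - v τ k1 * v τ (k - k1)) else 0

/-- `(u,v)` is a solution of the transformed Majda–Biello system on `[0,T]`: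
it belongs to `L^∞([0,T];(Ḣ^0)²)` and satisfies the integrated equations. -/
def IsMBSolution (T : ℝ) (u v : ℝ → ℤ → ℂ) : Prop :=
  (∃ M : ℝ, ∀ t ∈ Icc (0 : ℝ) T,
      memH 0 (u t) ∧ memH 0 (v t) ∧ hnorm2 0 (u t) (v t) ≤ M) ∧
  ∀ k : ℤ, k ≠ 0 → ∀ t ∈ Icc (0 : ℝ) T,
    (u t k - u 0 k = Complex.I * (k : ℂ) / 2 * (∫ τ in (0 : ℝ)..t, mbRHSu u v τ k)) ∧
    (v t k - v 0 k = Complex.I * (k : ℂ) / 2 * (∫ τ in (0 : ℝ)..t, mbRHSv u v τ k))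

/-- The (finite) right-hand side of the `u`-equation of the `N`-th Galerkin system. -/
def galRHSu (N : ℕ) (t : ℝ) (f g : ℤ → ℂ) (k : ℤ) : ℂ :=
  Complex.I * (k : ℂ) / 2 * ∑ k1 ∈ Finset.Icc (-(N : ℤ)) (N : ℤ),
    (if k1 ≠ 0 ∧ k - k1 ≠ 0 ∧ |k - k1| ≤ (N : ℤ) then
      osc2 t k k1 * (f k1 * g (k - k1) - f k1 * f (k - k1)) else 0)

/-- The (finite) right-hand side of the `v`-equation of the `N`-th Galerkin system. -/
def galRHSv (N : ℕ) (t : ℝ) (f g : ℤ → ℂ) (k : ℤ) : ℂ :=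
  Complex.I * (k : ℂ) / 2 * ∑ k1 ∈ Finset.Icc (-(N : ℤ)) (N : ℤ),
    (if k1 ≠ 0 ∧ k - k1 ≠ 0 ∧ |k - k1| ≤ (N : ℤ) then
      osc2 t k k1 * (f k1 * g (k - k1) - g k1 * g (k - k1)) else 0)

/-- `(u,v)` solves the `N`-th Galerkin system on the set `S` with initial data
`(uin, vin)`. -/
def IsGalerkinSolution (N : ℕ) (uin vin : ℤ → ℂ) (S : Set ℝ) (u v : ℝ → ℤ → ℂ) : Prop :=
  (∀ k : ℤ, k ≠ 0 → u 0 k = uin k ∧ v 0 k = vin k) ∧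
  ∀ t ∈ S, ∀ k : ℤ, k ≠ 0 →
    HasDerivWithinAt (fun τ : ℝ => u τ k)
      (if |k| ≤ (N : ℤ) then galRHSu N t (u t) (v t) k else 0) S t ∧
    HasDerivWithinAt (fun τ : ℝ => v τ k)
      (if |k| ≤ (N : ℤ) then galRHSv N t (u t) (v t) k else 0) S t


/-- The oscillating factor has modulus `1`. -/
lemma norm_osc2 (t : ℝ) (k k1 : ℤ) : ‖osc2 t k k1‖ = 1 := by
  have h : (3 * Complex.I * (k : ℂ) * (k1 : ℂ) * ((k - k1 : ℤ) : ℂ) * (t : ℂ))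
      = ((3 * (k : ℝ) * (k1 : ℝ) * ((k : ℝ) - (k1 : ℝ)) * t : ℝ) : ℂ) * Complex.I := by
    push_cast; ring
  rw [osc2, h, Complex.norm_exp_ofReal_mul_I]

lemma rpow_sq_eq (x p : ℝ) (hx : 0 ≤ x) : (x ^ p) ^ 2 = x ^ (2 * p) := by
  rw [← Real.rpow_natCast (x ^ p) 2, ← Real.rpow_mul hx]
  congr 1; push_cast; ring

lemma wt_eq_sq (p : ℝ) (k : ℤ) : wt p k = (|(k : ℝ)| ^ p) ^ 2 := by
  rw [wt, Int.cast_abs, rpow_sq_eq _ _ (abs_nonneg _)]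

lemma wt_nonneg (p : ℝ) (k : ℤ) : 0 ≤ wt p k := by
  rw [wt_eq_sq]; exact sq_nonneg _

set_option maxHeartbeats 1600000 in
/-- High-low frequency estimate for `B₂`. -/
theorem b2_high_low_estimate (s α : ℝ) (hs : 0 ≤ s) (hα0 : 0 ≤ α)
    (hα : α < 1 / 2) :
    ∃ C : ℝ, ∀ N : ℕ, 0 < N → ∀ t : ℝ, ∀ u v : ℤ → ℂ,
      memH (-α) u → memH s v →
      memH s (B2 t (Plow N u) (Qhigh N v)) ∧
      hnorm s (B2 t (Plow N u) (Qhigh N v)) ≤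
        C / (N : ℝ) * hnorm (-α) u * hnorm s v := by
  classical
  have hKsum : Summable (fun k : ℤ => |(k : ℝ)| ^ (2 * α - 2)) := by
    have := Real.summable_abs_int_rpow (b := 2 - 2 * α) (by linarith)
    convert this using 2 with k
    ring_nf
  set Kα : ℝ := ∑' k : ℤ, |(k : ℝ)| ^ (2 * α - 2) with hKαdef
  have hKnn : 0 ≤ Kα :=
    tsum_nonneg fun k => Real.rpow_nonneg (abs_nonneg _) _
  refine ⟨2 ^ s * Real.sqrt Kα / 6, ?_⟩
  intro N hN t u v hu hv
  set φ := Plow N u with hφdef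
  set ψ := Qhigh N v with hψdef
  have hNR : (0 : ℝ) < N := by exact_mod_cast hN
  -- basic properties of the projections
  have hφle : ∀ k, ‖φ k‖ ≤ ‖u k‖ := by
    intro k; simp only [hφdef, Plow]; split <;> simp
  have hψle : ∀ k, ‖ψ k‖ ≤ ‖v k‖ := by
    intro k; simp only [hψdef, Qhigh]; split <;> simp
  have hφ0 : ∀ k, ¬(|k| ≤ (N : ℤ)) → φ k = 0 := by
    intro k hk; simp only [hφdef, Plow]; simp [hk]
  have hψ0 : ∀ k, |k| ≤ (N : ℤ) → ψ k = 0 := by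
    intro k hk; simp only [hψdef, Qhigh]; simp [hk]
  -- the two sequences entering the convolution bound
  set h : ℤ → ℝ := fun k => if k = 0 then 0 else ‖φ k‖ / |(k : ℝ)| with hhdef
  set g : ℤ → ℝ := fun k => |(k : ℝ)| ^ s * ‖ψ k‖ with hgdef
  have hhnn : ∀ k, 0 ≤ h k := by
    intro k; rw [hhdef]; dsimp only; split
    · exact le_rfl
    · positivity
  have hgnn : ∀ k, 0 ≤ g k := by
    intro k; rw [hgdef]; positivity
  have hg0 : g 0 = 0 := by
    rw [hgdef]; dsimp only
    rw [hψ0 0 (by simp)]; simp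
  -- `g²` is summable with sum controlled by `hnorm s v`
  set Iv : ℤ → ℝ := Set.indicator {k : ℤ | k ≠ 0} (fun k => wt s k * ‖v k‖ ^ 2) with hIvdef
  have hIv : Summable Iv := summable_subtype_iff_indicator.mp hv
  have hIvnn : ∀ k, 0 ≤ Iv k := by
    intro k; rw [hIvdef]
    exact Set.indicator_nonneg (fun k _ => mul_nonneg (wt_nonneg s k) (sq_nonneg _)) k
  have hg2le : ∀ k : ℤ, g k ^ 2 ≤ Iv k := by
    intro k
    by_cases hk : k = 0
    · rw [hk, hg0]
      simpa using hIvnn 0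
    · have hmem : Iv k = wt s k * ‖v k‖ ^ 2 :=
        Set.indicator_of_mem (show k ∈ {k : ℤ | k ≠ 0} from hk) _
      rw [hmem, wt_eq_sq, hgdef]
      dsimp only
      rw [mul_pow]
      gcongr
      exact hψle k
  have hg2 : Summable (fun k : ℤ => g k ^ 2) :=
    hIv.of_nonneg_of_le (fun k => sq_nonneg _) hg2le
  set G2 : ℝ := ∑' k : ℤ, g k ^ 2 with hG2def
  have hG2nn : 0 ≤ G2 := tsum_nonneg fun k => sq_nonneg _
  have hnvnn : 0 ≤ hnorm s v := Real.sqrt_nonneg _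
  have hnvsq : hnorm s v ^ 2 = ∑' k : ℤ, Iv k := by
    rw [hnorm, Real.sq_sqrt
      (tsum_nonneg fun k => mul_nonneg (wt_nonneg s _) (sq_nonneg _))]
    exact tsum_subtype {k : ℤ | k ≠ 0} (fun k => wt s k * ‖v k‖ ^ 2)
  have hG2le : G2 ≤ hnorm s v ^ 2 := by
    rw [hnvsq]; exact Summable.tsum_le_tsum hg2le hg2 hIv
  have hsqG2 : Real.sqrt G2 ≤ hnorm s v := by
    rw [← Real.sqrt_sq hnvnn]; exact Real.sqrt_le_sqrt hG2le
  -- the `ℓ¹` bound for `h`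
  set F : Finset ℤ := Finset.Icc (-(N : ℤ)) (N : ℤ) with hFdef
  set A : ℝ := ∑ k ∈ F, h k with hAdef
  have hAnn : 0 ≤ A := Finset.sum_nonneg fun k _ => hhnn k
  have hnunn : 0 ≤ hnorm (-α) u := Real.sqrt_nonneg _
  set Iu : ℤ → ℝ := Set.indicator {k : ℤ | k ≠ 0} (fun k => wt (-α) k * ‖u k‖ ^ 2) with hIudef
  have hIu : Summable Iu := summable_subtype_iff_indicator.mp hu
  have hIunn : ∀ k, 0 ≤ Iu k := by
    intro k; rw [hIudef]
    exact Set.indicator_nonneg (fun k _ => mul_nonneg (wt_nonneg _ k) (sq_nonneg _)) k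
  have hnusq : hnorm (-α) u ^ 2 = ∑' k : ℤ, Iu k := by
    rw [hnorm, Real.sq_sqrt
      (tsum_nonneg fun k => mul_nonneg (wt_nonneg _ _) (sq_nonneg _))]
    exact tsum_subtype {k : ℤ | k ≠ 0} (fun k => wt (-α) k * ‖u k‖ ^ 2)
  have hAle : A ≤ Real.sqrt Kα * hnorm (-α) u := by
    set a : ℤ → ℝ := fun k => |(k : ℝ)| ^ (α - 1) with hadef
    set b : ℤ → ℝ := fun k => if k = 0 then 0 else |(k : ℝ)| ^ (-α) * ‖φ k‖ with hbdef
    have hab : ∀ k, h k = a k * b k := by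
      intro k
      by_cases hk : k = 0
      · rw [hk, hhdef, hbdef]; simp
      · have hkpos : 0 < |(k : ℝ)| := abs_pos.mpr (by exact_mod_cast hk)
        rw [hhdef, hbdef, hadef]
        dsimp only
        rw [if_neg hk, if_neg hk, ← mul_assoc, ← Real.rpow_add hkpos,
          show α - 1 + -α = -1 by ring, Real.rpow_neg_one]
        ring
    have hCS := Finset.sum_mul_sq_le_sq_mul_sq F a b
    have ha2 : ∑ k ∈ F, a k ^ 2 ≤ Kα := by
      have e : ∀ k : ℤ, a k ^ 2 = |(k : ℝ)| ^ (2 * α - 2) := by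
        intro k
        rw [hadef]; dsimp only
        rw [rpow_sq_eq _ _ (abs_nonneg _)]
        congr 1; ring
      calc ∑ k ∈ F, a k ^ 2 = ∑ k ∈ F, |(k : ℝ)| ^ (2 * α - 2) :=
            Finset.sum_congr rfl fun k _ => e k
        _ ≤ Kα := Summable.sum_le_tsum F (fun k _ => Real.rpow_nonneg (abs_nonneg _) _) hKsum
    have hb2 : ∑ k ∈ F, b k ^ 2 ≤ hnorm (-α) u ^ 2 := by
      have e : ∀ k : ℤ, b k ^ 2 ≤ Iu k := by
        intro k
        by_cases hk : k = 0
        · rw [hbdef]; dsimp only; rw [if_pos hk]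
          simpa using hIunn k
        · have hmem : Iu k = wt (-α) k * ‖u k‖ ^ 2 :=
            Set.indicator_of_mem (show k ∈ {k : ℤ | k ≠ 0} from hk) _
          rw [hmem, wt_eq_sq, hbdef]
          dsimp only
          rw [if_neg hk, mul_pow]
          gcongr
          exact hφle k
      calc ∑ k ∈ F, b k ^ 2 ≤ ∑ k ∈ F, Iu k := Finset.sum_le_sum fun k _ => e k
        _ ≤ ∑' k : ℤ, Iu k := Summable.sum_le_tsum F (fun k _ => hIunn k) hIu
        _ = hnorm (-α) u ^ 2 := hnusq.symm
    have hA2 : A ^ 2 ≤ Kα * hnorm (-α) u ^ 2 := by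
      have eA : A = ∑ k ∈ F, a k * b k := by
        rw [hAdef]; exact Finset.sum_congr rfl fun k _ => hab k
      rw [eA]
      calc (∑ k ∈ F, a k * b k) ^ 2 ≤ (∑ k ∈ F, a k ^ 2) * ∑ k ∈ F, b k ^ 2 := hCS
        _ ≤ Kα * hnorm (-α) u ^ 2 := by
            apply mul_le_mul ha2 hb2 (Finset.sum_nonneg fun k _ => sq_nonneg _) hKnn
    calc A = Real.sqrt (A ^ 2) := (Real.sqrt_sq hAnn).symm
      _ ≤ Real.sqrt (Kα * hnorm (-α) u ^ 2) := Real.sqrt_le_sqrt hA2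
      _ = Real.sqrt Kα * hnorm (-α) u := by
          rw [Real.sqrt_mul hKnn, Real.sqrt_sq hnunn]
  -- rewriting `B2` as a finite sum
  set T : ℤ → ℤ → ℂ := fun k k1 =>
    if k1 ≠ 0 ∧ k - k1 ≠ 0 then
      osc2 t k k1 * φ k1 * ψ (k - k1) / ((k1 : ℂ) * ((k - k1 : ℤ) : ℂ)) else 0 with hTdef
  have hB2 : ∀ k : ℤ, B2 t φ ψ k = (1 / 6 : ℂ) * ∑ k1 ∈ F, T k k1 := by
    intro k
    rw [B2]
    congr 1
    refine tsum_eq_sum fun k1 hk1 => ?_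
    have hk1' : ¬(|k1| ≤ (N : ℤ)) := fun hle => hk1 (Finset.mem_Icc.mpr (abs_le.mp hle))
    have hz : φ k1 = 0 := hφ0 k1 hk1'
    by_cases hc : k1 ≠ 0 ∧ k - k1 ≠ 0 <;> simp [hc, hz]
  -- the pointwise term bound
  have hterm : ∀ k k1 : ℤ, |(k : ℝ)| ^ s * ‖T k k1‖ ≤ (2 ^ s / N) * (h k1 * g (k - k1)) := by
    intro k k1
    have hRnn : 0 ≤ (2 ^ s / N) * (h k1 * g (k - k1)) := by
      apply mul_nonneg (by positivity) (mul_nonneg (hhnn _) (hgnn _))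
    by_cases hc : k1 ≠ 0 ∧ k - k1 ≠ 0
    · obtain ⟨h1, h2⟩ := hc
      have hTnorm : ‖T k k1‖ = ‖φ k1‖ * ‖ψ (k - k1)‖ / (|(k1 : ℝ)| * |((k - k1 : ℤ) : ℝ)|) := by
        rw [hTdef]
        dsimp only
        rw [if_pos ⟨h1, h2⟩, norm_div, norm_mul, norm_mul, norm_mul, norm_osc2, one_mul,
          Complex.norm_intCast, Complex.norm_intCast]
      by_cases hφk : φ k1 = 0
      · rw [hTnorm, hφk]; simpa using hRnn
      by_cases hψk : ψ (k - k1) = 0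
      · rw [hTnorm, hψk]; simpa using hRnn
      have hk1N : |k1| ≤ (N : ℤ) := by
        by_contra hcon; exact hφk (hφ0 _ hcon)
      have hk2N : ¬(|k - k1| ≤ (N : ℤ)) := fun hle => hψk (hψ0 _ hle)
      push_neg at hk2N
      have hk1R : |(k1 : ℝ)| ≤ (N : ℝ) := by
        rw [← Int.cast_abs]; exact_mod_cast hk1N
      have hk2R : (N : ℝ) ≤ |((k - k1 : ℤ) : ℝ)| := by
        rw [← Int.cast_abs]; exact_mod_cast le_of_lt hk2N
      have hk2pos : 0 < |((k - k1 : ℤ) : ℝ)| := lt_of_lt_of_le hNR hk2R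
      have hk1pos : 0 < |(k1 : ℝ)| := abs_pos.mpr (by exact_mod_cast h1)
      have hkle : |(k : ℝ)| ≤ 2 * |((k - k1 : ℤ) : ℝ)| := by
        have e : (k : ℝ) = (k1 : ℝ) + ((k - k1 : ℤ) : ℝ) := by push_cast; ring
        calc |(k : ℝ)| ≤ |(k1 : ℝ)| + |((k - k1 : ℤ) : ℝ)| := by rw [e]; exact abs_add_le _ _
          _ ≤ (N : ℝ) + |((k - k1 : ℤ) : ℝ)| := by gcongr
          _ ≤ |((k - k1 : ℤ) : ℝ)| + |((k - k1 : ℤ) : ℝ)| := by gcongr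
          _ = 2 * |((k - k1 : ℤ) : ℝ)| := by ring
      have hpow : |(k : ℝ)| ^ s ≤ 2 ^ s * |((k - k1 : ℤ) : ℝ)| ^ s := by
        calc |(k : ℝ)| ^ s ≤ (2 * |((k - k1 : ℤ) : ℝ)|) ^ s :=
              Real.rpow_le_rpow (abs_nonneg _) hkle hs
          _ = 2 ^ s * |((k - k1 : ℤ) : ℝ)| ^ s := Real.mul_rpow (by norm_num) (abs_nonneg _)
      have hkey : |(k : ℝ)| ^ s / |((k - k1 : ℤ) : ℝ)| ≤ 2 ^ s * |((k - k1 : ℤ) : ℝ)| ^ s / N := by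
        rw [div_le_div_iff₀ hk2pos hNR]
        exact mul_le_mul hpow hk2R (le_of_lt hNR) (by positivity)
      have hP : (0 : ℝ) ≤ ‖φ k1‖ / |(k1 : ℝ)| * ‖ψ (k - k1)‖ := by positivity
      have hmain := mul_le_mul_of_nonneg_right hkey hP
      have hhk1 : h k1 = ‖φ k1‖ / |(k1 : ℝ)| := by rw [hhdef]; dsimp only; rw [if_neg h1]
      rw [hTnorm, hhk1, hgdef]
      dsimp only
      calc |(k : ℝ)| ^ s * (‖φ k1‖ * ‖ψ (k - k1)‖ / (|(k1 : ℝ)| * |((k - k1 : ℤ) : ℝ)|))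
          = |(k : ℝ)| ^ s / |((k - k1 : ℤ) : ℝ)| * (‖φ k1‖ / |(k1 : ℝ)| * ‖ψ (k - k1)‖) := by
            field_simp
        _ ≤ 2 ^ s * |((k - k1 : ℤ) : ℝ)| ^ s / N * (‖φ k1‖ / |(k1 : ℝ)| * ‖ψ (k - k1)‖) := hmain
        _ = 2 ^ s / N * (‖φ k1‖ / |(k1 : ℝ)| * (|((k - k1 : ℤ) : ℝ)| ^ s * ‖ψ (k - k1)‖)) := by
            ring
    · rw [hTdef]; dsimp only; rw [if_neg hc]
      simpa using hRnn
  -- the pointwise convolution bound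
  have hWle : ∀ k : ℤ, |(k : ℝ)| ^ s * ‖B2 t φ ψ k‖
      ≤ (2 ^ s / (6 * N)) * ∑ k1 ∈ F, h k1 * g (k - k1) := by
    intro k
    rw [hB2 k, norm_mul]
    have h16 : ‖(1 / 6 : ℂ)‖ = 1 / 6 := by norm_num
    calc |(k : ℝ)| ^ s * (‖(1 / 6 : ℂ)‖ * ‖∑ k1 ∈ F, T k k1‖)
        ≤ |(k : ℝ)| ^ s * (1 / 6 * ∑ k1 ∈ F, ‖T k k1‖) := by
          rw [h16]
          have h1 : ‖∑ k1 ∈ F, T k k1‖ ≤ ∑ k1 ∈ F, ‖T k k1‖ := norm_sum_le F (T k)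
          have h2 : (0:ℝ) ≤ |(k : ℝ)| ^ s := Real.rpow_nonneg (abs_nonneg _) _
          have h3 : (0:ℝ) ≤ 1/6 := by norm_num
          nlinarith [mul_le_mul_of_nonneg_left h1 (mul_nonneg h3 h2)]
      _ = 1 / 6 * (|(k : ℝ)| ^ s * ∑ k1 ∈ F, ‖T k k1‖) := by ring
      _ = 1 / 6 * ∑ k1 ∈ F, |(k : ℝ)| ^ s * ‖T k k1‖ := by rw [Finset.mul_sum]
      _ ≤ 1 / 6 * ∑ k1 ∈ F, (2 ^ s / N) * (h k1 * g (k - k1)) := by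
          have hsum := Finset.sum_le_sum (fun k1 _ => hterm k k1) (s := F)
          exact mul_le_mul_of_nonneg_left hsum (by norm_num)
      _ = (2 ^ s / (6 * N)) * ∑ k1 ∈ F, h k1 * g (k - k1) := by
          rw [← Finset.mul_sum]
          rw [show (1:ℝ) / 6 * ((2 ^ s / N) * ∑ k1 ∈ F, h k1 * g (k - k1))
            = (2 ^ s / (6 * N)) * ∑ k1 ∈ F, h k1 * g (k - k1) from by ring]
  -- the majorant and its sum
  set M : ℤ → ℝ := fun k => ∑ k1 ∈ F, h k1 * g (k - k1) ^ 2 with hMdef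
  have htrans : ∀ k1 : ℤ, Summable (fun k : ℤ => g (k - k1) ^ 2) := by
    intro k1
    exact ((Equiv.subRight k1).summable_iff (f := fun k : ℤ => g k ^ 2)).mpr hg2
  have hMsum : Summable M :=
    summable_sum fun k1 _ => (htrans k1).mul_left (h k1)
  have hMnn : ∀ k, 0 ≤ M k := by
    intro k
    exact Finset.sum_nonneg fun k1 _ => mul_nonneg (hhnn _) (sq_nonneg _)
  have hMt : ∑' k : ℤ, M k = A * G2 := by
    calc ∑' k : ℤ, M k = ∑ k1 ∈ F, ∑' k : ℤ, h k1 * g (k - k1) ^ 2 :=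
          Summable.tsum_finsetSum fun k1 _ => (htrans k1).mul_left (h k1)
      _ = ∑ k1 ∈ F, h k1 * G2 := by
          refine Finset.sum_congr rfl fun k1 _ => ?_
          rw [tsum_mul_left]
          congr 1
          exact (Equiv.subRight k1).tsum_eq (fun k : ℤ => g k ^ 2)
      _ = A * G2 := by rw [← Finset.sum_mul]
  set D : ℝ := (2 ^ s / (6 * N)) ^ 2 * A with hDdef
  have hDnn : 0 ≤ D := mul_nonneg (sq_nonneg _) hAnn
  have hmaj : Summable (fun k : ℤ => D * M k) := hMsum.mul_left D
  have hmajnn : ∀ k, 0 ≤ D * M k := fun k => mul_nonneg hDnn (hMnn k)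
  -- the pointwise square bound
  have hpt : ∀ k : ℤ, wt s k * ‖B2 t φ ψ k‖ ^ 2 ≤ D * M k := by
    intro k
    have e1 : wt s k * ‖B2 t φ ψ k‖ ^ 2 = (|(k : ℝ)| ^ s * ‖B2 t φ ψ k‖) ^ 2 := by
      rw [wt_eq_sq]; ring
    have hCS := Finset.sum_mul_sq_le_sq_mul_sq F (fun k1 => Real.sqrt (h k1))
      (fun k1 => Real.sqrt (h k1) * g (k - k1))
    have e2 : ∑ k1 ∈ F, Real.sqrt (h k1) * (Real.sqrt (h k1) * g (k - k1))
        = ∑ k1 ∈ F, h k1 * g (k - k1) := by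
      refine Finset.sum_congr rfl fun k1 _ => ?_
      rw [← mul_assoc, Real.mul_self_sqrt (hhnn k1)]
    have e3 : ∑ k1 ∈ F, Real.sqrt (h k1) ^ 2 = A := by
      rw [hAdef]
      exact Finset.sum_congr rfl fun k1 _ => Real.sq_sqrt (hhnn k1)
    have e4 : ∑ k1 ∈ F, (Real.sqrt (h k1) * g (k - k1)) ^ 2 = M k := by
      rw [hMdef]
      refine Finset.sum_congr rfl fun k1 _ => ?_
      rw [mul_pow, Real.sq_sqrt (hhnn k1)]
    rw [e2, e3, e4] at hCS
    rw [e1, hDdef]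
    calc (|(k : ℝ)| ^ s * ‖B2 t φ ψ k‖) ^ 2
        ≤ ((2 ^ s / (6 * N)) * ∑ k1 ∈ F, h k1 * g (k - k1)) ^ 2 := by
          apply pow_le_pow_left₀ (by positivity) (hWle k)
      _ = (2 ^ s / (6 * N)) ^ 2 * (∑ k1 ∈ F, h k1 * g (k - k1)) ^ 2 := by ring
      _ ≤ (2 ^ s / (6 * N)) ^ 2 * (A * M k) := by
          have := mul_le_mul_of_nonneg_left hCS (show (0:ℝ) ≤ (2 ^ s / (6 * N)) ^ 2 by positivity)
          exact this
      _ = (2 ^ s / (6 * N)) ^ 2 * A * M k := by ring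
  -- membership
  have hmem : memH s (B2 t φ ψ) := by
    rw [memH]
    refine Summable.of_nonneg_of_le
      (fun k => mul_nonneg (wt_nonneg s _) (sq_nonneg _))
      (fun k => hpt k.1) ?_
    exact hmaj.subtype {k : ℤ | k ≠ 0}
  refine ⟨hmem, ?_⟩
  -- the norm bound
  have hBsq : hnorm s (B2 t φ ψ) ^ 2 ≤ D * (A * G2) := by
    rw [hnorm, Real.sq_sqrt
      (tsum_nonneg fun k => mul_nonneg (wt_nonneg s _) (sq_nonneg _))]
    calc ∑' k : {k : ℤ // k ≠ 0}, wt s k.1 * ‖B2 t φ ψ k.1‖ ^ 2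
        ≤ ∑' k : ℤ, D * M k := by
          refine Summable.tsum_le_tsum_of_inj Subtype.val Subtype.val_injective
            (fun c _ => hmajnn c) (fun i => hpt i.1) hmem ?_
          exact hmaj
      _ = D * ∑' k : ℤ, M k := tsum_mul_left
      _ = D * (A * G2) := by rw [hMt]
  have hBnn : 0 ≤ hnorm s (B2 t φ ψ) := Real.sqrt_nonneg _
  have hstep : hnorm s (B2 t φ ψ) ≤ 2 ^ s / (6 * N) * A * Real.sqrt G2 := by
    have e : D * (A * G2) = (2 ^ s / (6 * N) * A) ^ 2 * G2 := by rw [hDdef]; ring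
    calc hnorm s (B2 t φ ψ) = Real.sqrt (hnorm s (B2 t φ ψ) ^ 2) := (Real.sqrt_sq hBnn).symm
      _ ≤ Real.sqrt (D * (A * G2)) := Real.sqrt_le_sqrt hBsq
      _ = 2 ^ s / (6 * N) * A * Real.sqrt G2 := by
          rw [e, Real.sqrt_mul (sq_nonneg _), Real.sqrt_sq (by positivity)]
  calc hnorm s (B2 t φ ψ) ≤ 2 ^ s / (6 * N) * A * Real.sqrt G2 := hstep
    _ ≤ 2 ^ s / (6 * N) * (Real.sqrt Kα * hnorm (-α) u) * hnorm s v := by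
        apply mul_le_mul (mul_le_mul_of_nonneg_left hAle (by positivity)) hsqG2
          (Real.sqrt_nonneg _)
        apply mul_nonneg (by positivity)
        exact mul_nonneg (Real.sqrt_nonneg _) hnunn
    _ = 2 ^ s * Real.sqrt Kα / 6 / (N : ℝ) * hnorm (-α) u * hnorm s v := by
        ring
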